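/- Let (𝒳ᵢ, 𝒜ᵢ, {P_{θᵢ}}), i = 1,2, be statistical models and consider the product model on 𝒳₁ × 𝒳₂ with product measures P_{θ₁} × P_{θ₂} parameterized by (θ₁, θ₂) ∈ Θ₁ × Θ₂. If Â₁ ⊆ 𝒜₁ is an MVE-algebra for the first model, then Â₁ ⊗ {∅, 𝒳₂} (i.e., Â₁ viewed inside the product σ-algebra) is an MVE-algebra for the product model. -/

import Mathlib

open MeasureTheory ProbabilityTheory

/-- `χ` is a square-integrable unbiased estimator of zero for the family `P`. -/
def IsUEZero {𝓧 Θ : Type*} [MeasurableSpace 𝓧] (P : Θ → Measure 𝓧) (χ : 𝓧 → ℝ) : Prop :=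
  Measurable χ ∧ (∀ θ, MemLp χ 2 (P θ)) ∧ ∀ θ, ∫ x, χ x ∂P θ = 0

/-- `g` is a UMVUE: minimal variance at every `θ` among all unbiased estimators
(with finite second moments) of the same parametric function. -/
def IsUMVUE {𝓧 Θ : Type*} [MeasurableSpace 𝓧] (P : Θ → Measure 𝓧) (g : 𝓧 → ℝ) : Prop :=
  Measurable g ∧ (∀ θ, MemLp g 2 (P θ)) ∧
    ∀ g' : 𝓧 → ℝ, Measurable g' → (∀ θ, MemLp g' 2 (P θ)) →
      (∀ θ, ∫ x, g' x ∂P θ = ∫ x, g x ∂P θ) →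
      ∀ θ, variance g (P θ) ≤ variance g' (P θ)

/-- A sub-σ-algebra `𝓐` of the basic σ-algebra `m` is an MVE-algebra for the family `P`
if every `𝓐`-measurable statistic with finite second moments under every `P θ`
is a UMVUE of its expectation. -/
def IsMVEAlgebra {𝓧 Θ : Type*} [m : MeasurableSpace 𝓧] (P : Θ → Measure 𝓧)
    (𝓐 : MeasurableSpace 𝓧) : Prop :=
  𝓐 ≤ m ∧
    ∀ g : 𝓧 → ℝ, Measurable[𝓐] g → (∀ θ, MemLp g 2 (P θ)) → @IsUMVUE 𝓧 Θ m P g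

private lemma int_mul {𝓧 : Type*} [MeasurableSpace 𝓧] {μ : Measure 𝓧} {f g : 𝓧 → ℝ}
    (hf : MemLp f 2 μ) (hg : MemLp g 2 μ) : Integrable (fun x => f x * g x) μ := by
  have h : (1 : ENNReal) / 1 = 1 / 2 + 1 / 2 := by
    rw [ENNReal.add_halves, div_one]
  have := hg.smul (φ := f) (r := 1) hf
    (hpqr := ⟨by rw [ENNReal.inv_two_add_inv_two, inv_one]⟩)
  rw [memLp_one_iff_integrable] at this
  exact this

private lemma var_expand {𝓧 : Type*} [MeasurableSpace 𝓧] {μ : Measure 𝓧}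
    [IsProbabilityMeasure μ] {g χ : 𝓧 → ℝ} (hg : MemLp g 2 μ) (hχ : MemLp χ 2 μ) (c : ℝ) :
    variance (fun x => g x + c * χ x) μ
      = variance g μ + 2 * c * ((∫ x, g x * χ x ∂μ) - (∫ x, g x ∂μ) * (∫ x, χ x ∂μ))
        + c ^ 2 * variance χ μ := by
  have hsum : MemLp (fun x => g x + c * χ x) 2 μ := hg.add (hχ.const_mul c)
  have hgi : Integrable g μ := hg.integrable one_le_two
  have hχi : Integrable χ μ := hχ.integrable one_le_two
  have hg2 : Integrable (fun x => g x ^ 2) μ := hg.integrable_sq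
  have hχ2 : Integrable (fun x => χ x ^ 2) μ := hχ.integrable_sq
  have hgχ : Integrable (fun x => g x * χ x) μ := int_mul hg hχ
  rw [variance_eq_sub hsum, variance_eq_sub hg, variance_eq_sub hχ]
  simp only [Pi.pow_apply]
  have e1 : ∫ x, (g x + c * χ x) ^ 2 ∂μ
      = ∫ x, g x ^ 2 ∂μ + (2 * c) * ∫ x, g x * χ x ∂μ + c ^ 2 * ∫ x, χ x ^ 2 ∂μ := by
    calc ∫ x, (g x + c * χ x) ^ 2 ∂μ
        = ∫ x, (g x ^ 2 + (2 * c) * (g x * χ x) + c ^ 2 * χ x ^ 2) ∂μ := by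
          congr 1; funext x; ring
      _ = _ := by
          have hA : Integrable (fun x => g x ^ 2 + 2 * c * (g x * χ x)) μ :=
            hg2.add (hgχ.const_mul (2 * c))
          have hB : Integrable (fun x => c ^ 2 * χ x ^ 2) μ := hχ2.const_mul (c ^ 2)
          have hC : Integrable (fun x => 2 * c * (g x * χ x)) μ := hgχ.const_mul (2 * c)
          rw [integral_add hA hB, integral_add hg2 hC, integral_const_mul, integral_const_mul]
  have e2 : ∫ x, (g x + c * χ x) ∂μ = ∫ x, g x ∂μ + c * ∫ x, χ x ∂μ := by
    have hD : Integrable (fun x => c * χ x) μ := hχi.const_mul c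
    rw [integral_add hgi hD, integral_const_mul]
  rw [e1, e2]; ring

private lemma umvue_uncorr {𝓧 Θ : Type*} [MeasurableSpace 𝓧] {P : Θ → Measure 𝓧}
    [∀ θ, IsProbabilityMeasure (P θ)] {g χ : 𝓧 → ℝ}
    (hg : IsUMVUE P g) (hχ : IsUEZero P χ) (θ : Θ) : ∫ x, g x * χ x ∂P θ = 0 := by
  obtain ⟨hgm, hgL, hmin⟩ := hg
  obtain ⟨hχm, hχL, hχ0⟩ := hχ
  have key : ∀ c : ℝ, variance g (P θ) ≤ variance (fun x => g x + c * χ x) (P θ) := by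
    intro c
    refine hmin (fun x => g x + c * χ x) (hgm.add (measurable_const.mul hχm))
      (fun θ' => (hgL θ').add ((hχL θ').const_mul c)) (fun θ' => ?_) θ
    rw [integral_add ((hgL θ').integrable one_le_two)
      (((hχL θ').integrable one_le_two).const_mul c), integral_const_mul, hχ0 θ', mul_zero,
      add_zero]
  set C := ∫ x, g x * χ x ∂P θ with hC
  have hV : 0 ≤ variance χ (P θ) := variance_nonneg _ _
  set V := variance χ (P θ) with hVdef
  have key2 : ∀ c : ℝ, 0 ≤ 2 * c * C + c ^ 2 * V := by
    intro c
    have h := key c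
    rw [var_expand (hgL θ) (hχL θ) c, hχ0 θ, mul_zero, sub_zero] at h
    linarith
  have hk := key2 (-C / (V + 1))
  have hV1 : 0 < V + 1 := by linarith
  have hsq : C ^ 2 ≤ 0 := by
    have h2 : 0 ≤ (2 * (-C / (V + 1)) * C + (-C / (V + 1)) ^ 2 * V) * (V + 1) ^ 2 :=
      mul_nonneg hk (by positivity)
    have he : (2 * (-C / (V + 1)) * C + (-C / (V + 1)) ^ 2 * V) * (V + 1) ^ 2
        = -(C ^ 2) * (V + 2) := by
      field_simp
      ring
    rw [he] at h2
    nlinarith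
  have : C = 0 := by nlinarith [sq_nonneg C]
  exact this

private lemma var_le_of_uncorr {𝓧 : Type*} [MeasurableSpace 𝓧] {μ : Measure 𝓧}
    [IsProbabilityMeasure μ] {g χ : 𝓧 → ℝ} (hg : MemLp g 2 μ) (hχ : MemLp χ 2 μ)
    (h0 : ∫ x, χ x ∂μ = 0) (horth : ∫ x, g x * χ x ∂μ = 0) :
    variance g μ ≤ variance (fun x => g x + χ x) μ := by
  have h := var_expand hg hχ 1
  simp only [one_mul, one_pow, horth, h0, mul_zero, sub_zero, mul_one] at h
  rw [h]
  have := variance_nonneg χ μ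
  linarith

private lemma memℒp_int_prod {𝓧₁ 𝓧₂ : Type*} [MeasurableSpace 𝓧₁] [MeasurableSpace 𝓧₂]
    {μ : Measure 𝓧₁} {ν : Measure 𝓧₂} [IsProbabilityMeasure μ] [IsProbabilityMeasure ν]
    {χ : 𝓧₁ × 𝓧₂ → ℝ} (hm : Measurable χ) (hL : MemLp χ 2 (μ.prod ν)) :
    MemLp (fun x₁ => ∫ x₂, χ (x₁, x₂) ∂ν) 2 μ := by
  have hsm : StronglyMeasurable (fun x₁ => ∫ x₂, χ (x₁, x₂) ∂ν) :=
    hm.stronglyMeasurable.integral_prod_right'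
  rw [memLp_two_iff_integrable_sq hsm.aestronglyMeasurable]
  have hsq : Integrable (fun p => χ p ^ 2) (μ.prod ν) :=
    (memLp_two_iff_integrable_sq hL.aestronglyMeasurable).mp hL
  have hF : Integrable (fun x₁ => ∫ x₂, χ (x₁, x₂) ^ 2 ∂ν) μ := hsq.integral_prod_left
  refine hF.mono' (hsm.measurable.pow_const 2).aestronglyMeasurable ?_
  filter_upwards [hsq.prod_right_ae] with x₁ hx₁
  have hmem : MemLp (fun y => χ (x₁, y)) 2 ν :=
    (memLp_two_iff_integrable_sq (hm.comp measurable_prodMk_left).aestronglyMeasurable).mpr hx₁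
  have hv := variance_nonneg (fun y => χ (x₁, y)) ν
  rw [variance_eq_sub hmem] at hv
  simp only [Pi.pow_apply] at hv
  rw [Real.norm_eq_abs, abs_of_nonneg (sq_nonneg _)]
  linarith

theorem stmt9 {𝓧₁ 𝓧₂ Θ₁ Θ₂ : Type*}
    [m₁ : MeasurableSpace 𝓧₁] [m₂ : MeasurableSpace 𝓧₂]
    (P₁ : Θ₁ → Measure 𝓧₁) (P₂ : Θ₂ → Measure 𝓧₂)
    [∀ θ, IsProbabilityMeasure (P₁ θ)] [∀ θ, IsProbabilityMeasure (P₂ θ)]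
    (𝓐₁ : MeasurableSpace 𝓧₁)
    (h₁ : @IsMVEAlgebra 𝓧₁ Θ₁ m₁ P₁ 𝓐₁) :
    @IsMVEAlgebra (𝓧₁ × 𝓧₂) (Θ₁ × Θ₂) (@Prod.instMeasurableSpace 𝓧₁ 𝓧₂ m₁ m₂)
      (fun p : Θ₁ × Θ₂ => @MeasureTheory.Measure.prod 𝓧₁ 𝓧₂ m₁ m₂ (P₁ p.1) (P₂ p.2))
      (MeasurableSpace.comap Prod.fst 𝓐₁) := by
  letI : MeasurableSpace 𝓧₁ := m₁
  obtain ⟨hle₁, hmain⟩ := h₁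
  have hle : MeasurableSpace.comap (Prod.fst : 𝓧₁ × 𝓧₂ → 𝓧₁) 𝓐₁
      ≤ @Prod.instMeasurableSpace 𝓧₁ 𝓧₂ m₁ m₂ :=
    (MeasurableSpace.comap_mono hle₁).trans (measurable_iff_comap_le.mp measurable_fst)
  refine ⟨hle, fun g hgm hgL => ⟨hgm.mono hle le_rfl, hgL, ?_⟩⟩
  rintro g' hg'm hg'L hg'mean ⟨θ₁, θ₂⟩
  have hne : Nonempty 𝓧₂ := by
    by_contra h
    rw [not_nonempty_iff] at h
    have h1 : (P₂ θ₂) Set.univ = 1 := measure_univ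
    rw [Set.univ_eq_empty_iff.mpr h, measure_empty] at h1
    exact zero_ne_one h1
  obtain ⟨x₂₀⟩ := hne
  set g₁ : 𝓧₁ → ℝ := fun x₁ => g (x₁, x₂₀) with hg₁def
  -- factorization g = g₁ ∘ fst
  have hfact : ∀ p : 𝓧₁ × 𝓧₂, g p = g₁ p.1 := by
    rintro ⟨x₁, x₂⟩
    have hs : MeasurableSet[MeasurableSpace.comap Prod.fst 𝓐₁] (g ⁻¹' {g (x₁, x₂)}) :=
      hgm (measurableSet_singleton _)
    rw [MeasurableSpace.measurableSet_comap] at hs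
    obtain ⟨A, hA, hAeq⟩ := hs
    have hx : x₁ ∈ A := by
      have : (x₁, x₂) ∈ Prod.fst ⁻¹' A := by rw [hAeq]; exact rfl
      exact this
    have : (x₁, x₂₀) ∈ g ⁻¹' {g (x₁, x₂)} := by rw [← hAeq]; exact hx
    simpa [hg₁def, eq_comm] using this
  have hgfact : g = fun p => g₁ p.1 := funext hfact
  -- measurability of g₁
  have hg₁m : Measurable[𝓐₁] g₁ := by
    have hemb : @Measurable 𝓧₁ (𝓧₁ × 𝓧₂) 𝓐₁ (MeasurableSpace.comap Prod.fst 𝓐₁)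
        (fun x₁ => (x₁, x₂₀)) := by
      rw [measurable_iff_comap_le, MeasurableSpace.comap_comp]
      have hid : (Prod.fst ∘ fun x₁ : 𝓧₁ => ((x₁, x₂₀) : 𝓧₁ × 𝓧₂)) = id := rfl
      rw [hid, MeasurableSpace.comap_id]
    exact @Measurable.comp 𝓧₁ (𝓧₁ × 𝓧₂) ℝ 𝓐₁ (MeasurableSpace.comap Prod.fst 𝓐₁) _ _ _ hgm hemb
  -- MemLp of g₁ under every marginal
  have hmap : ∀ (a : Θ₁) (b : Θ₂), Measure.map Prod.fst ((P₁ a).prod (P₂ b)) = P₁ a := by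
    intro a b
    rw [Measure.map_fst_prod]
    simp
  have hg₁L : ∀ θ', MemLp g₁ 2 (P₁ θ') := by
    intro θ'
    have hmem := hgL (θ', θ₂)
    rw [hgfact] at hmem
    have hsm : AEStronglyMeasurable g₁ (Measure.map Prod.fst ((P₁ θ').prod (P₂ θ₂))) :=
      ((hg₁m.mono hle₁ le_rfl)).aestronglyMeasurable
    have := (memLp_map_measure_iff (p := 2) hsm measurable_fst.aemeasurable).mpr hmem
    rwa [hmap θ' θ₂] at this
  have hg₁umvue : IsUMVUE P₁ g₁ := hmain g₁ hg₁m hg₁L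
  -- the unbiased estimator of zero
  set χ : 𝓧₁ × 𝓧₂ → ℝ := fun p => g' p - g p with hχdef
  have hgm' : Measurable g := hgm.mono hle le_rfl
  have hχm : Measurable χ := hg'm.sub hgm'
  have hχL : ∀ θ : Θ₁ × Θ₂, MemLp χ 2 ((P₁ θ.1).prod (P₂ θ.2)) :=
    fun θ => (hg'L θ).sub (hgL θ)
  have hχ0 : ∀ θ : Θ₁ × Θ₂, ∫ p, χ p ∂((P₁ θ.1).prod (P₂ θ.2)) = 0 := by
    intro θ
    rw [hχdef]
    rw [integral_sub ((hg'L θ).integrable one_le_two) ((hgL θ).integrable one_le_two)]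
    rw [hg'mean θ, sub_self]
  -- the marginalized estimator of zero
  set χ₁ : 𝓧₁ → ℝ := fun x₁ => ∫ x₂, χ (x₁, x₂) ∂(P₂ θ₂) with hχ₁def
  have hχ₁ : IsUEZero P₁ χ₁ := by
    refine ⟨hχm.stronglyMeasurable.integral_prod_right'.measurable, ?_, ?_⟩
    · intro θ'
      exact memℒp_int_prod hχm (hχL (θ', θ₂))
    · intro θ'
      have := integral_prod χ ((hχL (θ', θ₂)).integrable one_le_two)
      rw [← this]
      exact hχ0 (θ', θ₂)
  -- orthogonality on the product
  have horth : ∫ p, g p * χ p ∂((P₁ θ₁).prod (P₂ θ₂)) = 0 := by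
    have hint : Integrable (fun p : 𝓧₁ × 𝓧₂ => g p * χ p) ((P₁ θ₁).prod (P₂ θ₂)) :=
      int_mul (hgL (θ₁, θ₂)) (hχL (θ₁, θ₂))
    calc ∫ p, g p * χ p ∂((P₁ θ₁).prod (P₂ θ₂))
        = ∫ p, g₁ p.1 * χ p ∂((P₁ θ₁).prod (P₂ θ₂)) := by simp only [hfact]
      _ = ∫ x₁, ∫ x₂, g₁ x₁ * χ (x₁, x₂) ∂(P₂ θ₂) ∂(P₁ θ₁) := by
          refine integral_prod _ ?_
          have : (fun p : 𝓧₁ × 𝓧₂ => g₁ p.1 * χ p) = fun p => g p * χ p := by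
            funext p; rw [hfact p]
          rw [this]; exact hint
      _ = ∫ x₁, g₁ x₁ * χ₁ x₁ ∂(P₁ θ₁) := by
          simp only [integral_const_mul, hχ₁def]
      _ = 0 := umvue_uncorr hg₁umvue hχ₁ θ₁
  -- conclude
  have hvar := var_le_of_uncorr (hgL (θ₁, θ₂)) (hχL (θ₁, θ₂)) (hχ0 (θ₁, θ₂)) horth
  have heq : (fun p => g p + χ p) = g' := by
    funext p; rw [hχdef]; ring
  rwa [heq] at hvar
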